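/- For all a with 0 < a < 1/√2, the function δ₂(a) = (4·sinh((1/2)·arccosh((3 - 2a²)/(2(1-a²)))) - (2a² - 1)/√(1-a²))/π satisfies 2√2/π < δ₂(a) < 3/π. -/

import Mathlib

open Real

/-- The inverse hyperbolic cosine on [1,∞). -/
noncomputable def arcosh (x : ℝ) : ℝ := Real.log (x + Real.sqrt (x^2 - 1))

/-- The density function of type-2 hyp-hor packings in the hyperbolic plane. -/
noncomputable def δ₂ (a : ℝ) : ℝ :=
  (4 * Real.sinh ((1/2) * _root_.arcosh ((3 - 2 * a^2) / (2 * (1 - a^2))))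
    - (2 * a^2 - 1) / Real.sqrt (1 - a^2)) / π

lemma sinh_half_arcosh (x : ℝ) (hx : 1 ≤ x) :
    Real.sinh ((1/2) * _root_.arcosh x) = Real.sqrt ((x - 1)/2) := by
  set s := Real.sqrt ((x - 1)/2) with hs
  have hsnn : 0 ≤ s := Real.sqrt_nonneg _
  have hs2 : s ^ 2 = (x - 1)/2 := Real.sq_sqrt (by linarith)
  have harg : x + Real.sqrt (x^2 - 1) = (s + Real.sqrt (1 + s^2))^2 := by
    have h1 : 1 + s ^ 2 = (x + 1)/2 := by rw [hs2]; ring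
    have h2 : Real.sqrt ((x+1)/2) ≥ 0 := Real.sqrt_nonneg _
    have h3 : Real.sqrt ((x+1)/2) ^ 2 = (x+1)/2 := Real.sq_sqrt (by linarith)
    have h4 : s * Real.sqrt ((x+1)/2) = Real.sqrt (x^2 - 1) / 2 := by
      rw [hs, ← Real.sqrt_mul (by linarith)]
      rw [show (x-1)/2 * ((x+1)/2) = (x^2-1) * (1/2)^2 by ring,
        Real.sqrt_mul (by nlinarith), Real.sqrt_sq (by norm_num : (0:ℝ) ≤ 1/2)]
      ring
    rw [h1]
    nlinarith [h3, h4]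
  have key : _root_.arcosh x = 2 * Real.arsinh s := by
    rw [_root_.arcosh, Real.arsinh, harg]
    rw [show (2:ℝ) = (2:ℕ) by norm_num, ← Real.log_pow]
  rw [key]
  rw [show (1/2 : ℝ) * (2 * Real.arsinh s) = Real.arsinh s by ring, Real.sinh_arsinh]

/-- For `0 < a < 1/√2` we have `2√2/π < δ₂ a < 3/π`. -/
theorem delta2_bounds (a : ℝ) (h0 : 0 < a) (h1 : a < 1 / Real.sqrt 2) :
    2 * Real.sqrt 2 / π < δ₂ a ∧ δ₂ a < 3 / π := by
  have h2 : Real.sqrt 2 ^ 2 = 2 := Real.sq_sqrt (by norm_num)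
  have h2pos : 0 < Real.sqrt 2 := Real.sqrt_pos.mpr (by norm_num)
  have ht : a ^ 2 < 1/2 := by
    have h3 : a * Real.sqrt 2 < 1 := (lt_div_iff₀ h2pos).mp h1
    nlinarith
  set t := a ^ 2 with htdef
  have ht0 : 0 < t := by positivity
  have h1t : 0 < 1 - t := by linarith
  set s1 := Real.sqrt (1 - t) with hs1def
  have hs1pos : 0 < s1 := Real.sqrt_pos.mpr h1t
  have hs1sq : s1 ^ 2 = 1 - t := Real.sq_sqrt h1t.le
  set x := (3 - 2 * t) / (2 * (1 - t)) with hxdef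
  have hx1 : 1 ≤ x := by
    rw [hxdef, le_div_iff₀ (by positivity)]
    linarith
  have hsinh : Real.sinh ((1/2) * _root_.arcosh x) = 1 / (2 * s1) := by
    rw [sinh_half_arcosh x hx1]
    have harg : (x - 1)/2 = (1 / (2 * s1))^2 := by
      rw [hxdef]
      field_simp
      nlinarith [hs1sq]
    rw [harg, Real.sqrt_sq (by positivity)]
  have hδ : δ₂ a = ((3 - 2*t)/s1) / π := by
    rw [δ₂, ← htdef, ← hxdef, ← hs1def, hsinh]
    congr 1
    field_simp
    ring
  rw [hδ]
  have hlo : 2 * Real.sqrt 2 < (3 - 2*t)/s1 := by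
    rw [lt_div_iff₀ hs1pos]
    have hne : (2*t - 1)^2 > 0 := by
      have : 2*t - 1 ≠ 0 := by intro h; nlinarith
      positivity
    nlinarith [hs1sq, h2, hs1pos.le, h2pos.le, sq_nonneg (2 * Real.sqrt 2 * s1 - (3 - 2*t))]
  have hhi : (3 - 2*t)/s1 < 3 := by
    rw [div_lt_iff₀ hs1pos]
    nlinarith [hs1sq, sq_nonneg (3 * s1 - (3 - 2*t))]
  exact ⟨(div_lt_div_iff_of_pos_right Real.pi_pos).mpr hlo, (div_lt_div_iff_of_pos_right Real.pi_pos).mpr hhi⟩
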